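/- Let r ≥ 1 and let ξ = (ξ_0, …, ξ_r) ∈ ℝ^{r+1} satisfy dim_ℚ Span_ℚ(ξ_0, …, ξ_r) ≥ 2. Then τ_r(ξ) ≤ 1/ω_0(ξ). Here τ_r(ξ) = sup T_r(ξ) (with sup ∅ = 0), where T_r(ξ) is the set of all τ > 0 for which there exists a sequence (L_n) of linear forms L = ℓ_0 X_0 + ⋯ + ℓ_r X_r with integer coefficients such that L_n(ξ) ≠ 0 for all n, L_n(ξ) → 0, |L_{n+1}(ξ)| = |L_n(ξ)|^{1+o(1)}, and |L_n(ξ)| ≤ H(L_n)^{−τ+o(1)}, with H(L) = max_{0≤i≤r} |ℓ_i|; and ω_0(ξ) is the supremum of all ω > 0 such that there exist infinitely many tuples (q_0, …, q_r) ∈ ℤ^{r+1} with |q_i ξ_j − q_j ξ_i| ≤ max(|q_0|, …, |q_r|)^{−ω} for all 0 ≤ i < j ≤ r. -/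

import Mathlib

open Filter Topology

/-- The height `H(L) = max_i |ℓ_i|` of an integer linear form `L = ℓ_0 X_0 + ⋯`. -/
def heightLF {n : ℕ} (L : Fin n → ℤ) : ℝ :=
  ((Finset.univ.sup fun i => (L i).natAbs : ℕ) : ℝ)

/-- The value `L(ξ) = ℓ_0 ξ_0 + ⋯ + ℓ_r ξ_r` of an integer linear form at `ξ`. -/
def evalLF {n : ℕ} (L : Fin n → ℤ) (ξ : Fin n → ℝ) : ℝ :=
  ∑ i, (L i : ℝ) * ξ i

/-- `ω_0(ξ)`: the supremum (in the extended reals) of all `ω > 0` such that there are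
infinitely many integer tuples `q` with `|q_i ξ_j - q_j ξ_i| ≤ (max_k |q_k|)^{-ω}`
for all `i < j`. -/
noncomputable def omega0 {n : ℕ} (ξ : Fin n → ℝ) : EReal :=
  sSup {x : EReal | ∃ ω : ℝ, 0 < ω ∧ x = (ω : EReal) ∧
    {q : Fin n → ℤ | ∀ i j : Fin n, i < j →
      |(q i : ℝ) * ξ j - (q j : ℝ) * ξ i| ≤
        ((Finset.univ.sup fun k => (q k).natAbs : ℕ) : ℝ) ^ (-ω)}.Infinite}

/-- The set `T_r(ξ)` of all `τ > 0` for which there is a sequence `(L_n)` of integer linear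
forms with `L_n(ξ) ≠ 0`, `L_n(ξ) → 0`, `|L_{n+1}(ξ)| = |L_n(ξ)|^{1+o(1)}` and
`|L_n(ξ)| ≤ H(L_n)^{-τ+o(1)}`. -/
def TSetR (r : ℕ) (ξ : Fin (r + 1) → ℝ) : Set ℝ :=
  {τ : ℝ | 0 < τ ∧ ∃ L : ℕ → Fin (r + 1) → ℤ, (∀ n, evalLF (L n) ξ ≠ 0) ∧
    Tendsto (fun n => evalLF (L n) ξ) atTop (𝓝 0) ∧
    (∃ δ : ℕ → ℝ, Tendsto δ atTop (𝓝 0) ∧ ∀ n,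
      |evalLF (L (n + 1)) ξ| = |evalLF (L n) ξ| ^ (1 + δ n)) ∧
    (∃ δ : ℕ → ℝ, Tendsto δ atTop (𝓝 0) ∧ ∀ n,
      |evalLF (L n) ξ| ≤ heightLF (L n) ^ (-τ + δ n))}

/-- The set `T_r'(ξ)` of all `τ > 0` for which there are a sequence `(L_n)` of integer linear
forms and `0 < α < 1 < β` with `|L_n(ξ)|^{1/n} → α`, `limsup H(L_n)^{1/n} ≤ β` and
`τ = -log α / log β`. -/
def TSetR' (r : ℕ) (ξ : Fin (r + 1) → ℝ) : Set ℝ :=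
  {τ : ℝ | 0 < τ ∧ ∃ L : ℕ → Fin (r + 1) → ℤ, ∃ α β : ℝ, 0 < α ∧ α < 1 ∧ 1 < β ∧
    Tendsto (fun n => |evalLF (L n) ξ| ^ (1 / (n : ℝ))) atTop (𝓝 α) ∧
    limsup (fun n => ((heightLF (L n) ^ (1 / (n : ℝ)) : ℝ) : EReal)) atTop ≤ (β : EReal) ∧
    τ = -Real.log α / Real.log β}

/-- The set `T_r''(ξ)` of all `τ > 0` such that for every increasing sequence `(Q_n)` of
positive integers, there is a sequence `(L_n)` of integer linear forms with
`H(L_n) ≤ Q_n^{1+o(1)}` and `|L_n(ξ)| = Q_n^{-τ+o(1)}`. -/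
def TSetR'' (r : ℕ) (ξ : Fin (r + 1) → ℝ) : Set ℝ :=
  {τ : ℝ | 0 < τ ∧ ∀ Q : ℕ → ℕ, StrictMono Q → (∀ n, 0 < Q n) →
    ∃ L : ℕ → Fin (r + 1) → ℤ,
      (∃ δ : ℕ → ℝ, Tendsto δ atTop (𝓝 0) ∧ ∀ n,
        heightLF (L n) ≤ (Q n : ℝ) ^ (1 + δ n)) ∧
      (∃ δ : ℕ → ℝ, Tendsto δ atTop (𝓝 0) ∧ ∀ n,
        |evalLF (L n) ξ| = (Q n : ℝ) ^ (-τ + δ n))}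

/-- The set `T_r'''(ξ)` of all `τ > 0` such that for all sequences `(Q_n)`, `(ε_n)` of
positive reals with `Q_n → ∞`, `ε_n → 0` and `ε_n ≥ Q_n^{-τ+o(1)}`, there is a sequence
`(L_n)` of integer linear forms with `H(L_n)/Q_n → 1` and `L_n(ξ)/ε_n → 1`. -/
def TSetR''' (r : ℕ) (ξ : Fin (r + 1) → ℝ) : Set ℝ :=
  {τ : ℝ | 0 < τ ∧ ∀ Q ε : ℕ → ℝ, (∀ n, 0 < Q n) → (∀ n, 0 < ε n) →
    Tendsto Q atTop atTop → Tendsto ε atTop (𝓝 0) →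
    (∃ δ : ℕ → ℝ, Tendsto δ atTop (𝓝 0) ∧ ∀ n, ε n ≥ Q n ^ (-τ + δ n)) →
    ∃ L : ℕ → Fin (r + 1) → ℤ,
      Tendsto (fun n => heightLF (L n) / Q n) atTop (𝓝 1) ∧
      Tendsto (fun n => evalLF (L n) ξ / ε n) atTop (𝓝 1)}

/-- `τ_r(ξ) = sup T_r(ξ)` (with `sup ∅ = 0`, as for the real `sSup`). -/
noncomputable def tauR (r : ℕ) (ξ : Fin (r + 1) → ℝ) : ℝ := sSup (TSetR r ξ)

/-- `τ_r'(ξ) = sup T_r'(ξ)` (with `sup ∅ = 0`, as for the real `sSup`). -/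
noncomputable def tauR' (r : ℕ) (ξ : Fin (r + 1) → ℝ) : ℝ := sSup (TSetR' r ξ)

/-- `τ_r''(ξ) = sup T_r''(ξ)` (with `sup ∅ = 0`, as for the real `sSup`). -/
noncomputable def tauR'' (r : ℕ) (ξ : Fin (r + 1) → ℝ) : ℝ := sSup (TSetR'' r ξ)

/-- `τ_r'''(ξ) = sup T_r'''(ξ)` (with `sup ∅ = 0`, as for the real `sSup`). -/
noncomputable def tauR''' (r : ℕ) (ξ : Fin (r + 1) → ℝ) : ℝ := sSup (TSetR''' r ξ)


section Aux
set_option maxHeartbeats 1000000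

lemma finite_bdd_height (n B : ℕ) :
    {q : Fin n → ℤ | (Finset.univ.sup fun k => (q k).natAbs) ≤ B}.Finite := by
  apply Set.Finite.subset (Set.Finite.pi (fun _ : Fin n => Set.finite_Icc (-(B:ℤ)) B))
  intro q hq
  simp only [Set.mem_setOf_eq] at hq
  simp only [Set.mem_pi, Set.mem_Icc, Set.mem_univ, forall_true_left]
  intro i
  have : (q i).natAbs ≤ B := le_trans (Finset.le_sup (f := fun k => (q k).natAbs) (Finset.mem_univ i)) hq
  omega

lemma exists_big_height {n : ℕ} {S : Set (Fin n → ℤ)} (hS : S.Infinite) (B : ℕ) :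
    ∃ q ∈ S, B ≤ Finset.univ.sup fun k => (q k).natAbs := by
  by_contra h
  push_neg at h
  exact hS (Set.Finite.subset (finite_bdd_height n B) (fun q hq => le_of_lt (h q hq)))

lemma simul_dirichlet (m : ℕ) (θ : Fin m → ℝ) (N : ℕ) (hN : 1 ≤ N) :
    ∃ (Q : ℕ) (p : Fin m → ℤ), 1 ≤ Q ∧ Q ≤ N^m ∧
      ∀ j, |(Q:ℝ) * θ j - (p j : ℝ)| < 1/N := by
  classical
  have hNpos : (0:ℝ) < N := by exact_mod_cast hN
  set g : ℕ → (Fin m → Fin N) := fun q j =>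
    ⟨(⌊(N:ℝ) * Int.fract ((q:ℝ) * θ j)⌋).toNat, by
      have h0 : (0:ℝ) ≤ Int.fract ((q:ℝ) * θ j) := Int.fract_nonneg _
      have h1 : Int.fract ((q:ℝ) * θ j) < 1 := Int.fract_lt_one _
      have hlt : ⌊(N:ℝ) * Int.fract ((q:ℝ) * θ j)⌋ < (N:ℤ) := by
        apply Int.floor_lt.2
        push_cast
        nlinarith
      have hge : (0:ℤ) ≤ ⌊(N:ℝ) * Int.fract ((q:ℝ) * θ j)⌋ :=
        Int.floor_nonneg.2 (by positivity)
      omega⟩ with hg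
  have hcard : (Finset.univ : Finset (Fin m → Fin N)).card < (Finset.range (N^m + 1)).card := by
    simp only [Finset.card_univ, Fintype.card_fun, Fintype.card_fin, Finset.card_range]
    omega
  obtain ⟨a, ha, b, hb, hab, hfeq⟩ :=
    Finset.exists_ne_map_eq_of_card_lt_of_maps_to hcard (fun a _ => Finset.mem_univ (g a))
  wlog hlt : a < b generalizing a b
  · exact this b hb a ha hab.symm hfeq.symm (by omega)
  refine ⟨b - a, fun j => ⌊(b:ℝ) * θ j⌋ - ⌊(a:ℝ) * θ j⌋, by omega, by
    have := Finset.mem_range.1 hb; omega, ?_⟩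
  intro j
  have hfl : ⌊(N:ℝ) * Int.fract ((b:ℝ) * θ j)⌋ = ⌊(N:ℝ) * Int.fract ((a:ℝ) * θ j)⌋ := by
    have := congrFun hfeq j
    rw [hg] at this
    simp only [Fin.mk.injEq] at this
    have hgeb : (0:ℤ) ≤ ⌊(N:ℝ) * Int.fract ((b:ℝ) * θ j)⌋ :=
      Int.floor_nonneg.2 (mul_nonneg hNpos.le (Int.fract_nonneg _))
    have hgea : (0:ℤ) ≤ ⌊(N:ℝ) * Int.fract ((a:ℝ) * θ j)⌋ :=
      Int.floor_nonneg.2 (mul_nonneg hNpos.le (Int.fract_nonneg _))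
    omega
  have habs : |(N:ℝ) * Int.fract ((b:ℝ) * θ j) - (N:ℝ) * Int.fract ((a:ℝ) * θ j)| < 1 :=
    Int.abs_sub_lt_one_of_floor_eq_floor hfl
  have key : ((b - a : ℕ):ℝ) * θ j - ((⌊(b:ℝ) * θ j⌋ - ⌊(a:ℝ) * θ j⌋ : ℤ):ℝ)
      = Int.fract ((b:ℝ) * θ j) - Int.fract ((a:ℝ) * θ j) := by
    rw [Nat.cast_sub hlt.le]
    unfold Int.fract
    push_cast
    ring
  rw [key, lt_div_iff₀ hNpos]
  calc |Int.fract ((b:ℝ) * θ j) - Int.fract ((a:ℝ) * θ j)| * N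
      = |(N:ℝ) * Int.fract ((b:ℝ) * θ j) - (N:ℝ) * Int.fract ((a:ℝ) * θ j)| := by
        rw [← mul_sub, abs_mul, abs_of_nonneg hNpos.le, mul_comm]
    _ < 1 := habs


lemma exists_good_omega (n : ℕ) (ξ : Fin n → ℝ) (k j₀ : Fin n) (hk : ξ k ≠ 0)
    (hirr : Irrational (ξ j₀ / ξ k)) :
    ∃ ω : ℝ, 0 < ω ∧
      {q : Fin n → ℤ | ∀ i j : Fin n, i < j →
        |(q i : ℝ) * ξ j - (q j : ℝ) * ξ i| ≤
          ((Finset.univ.sup fun k => (q k).natAbs : ℕ) : ℝ) ^ (-ω)}.Infinite := by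
  classical
  set θ : Fin n → ℝ := fun j => ξ j / ξ k with hθ
  have hθk : θ k = 1 := div_self hk
  have hθdef : ∀ j, θ j = ξ j / ξ k := fun j => rfl
  have hξ : ∀ j, ξ j = θ j * ξ k := fun j => (div_mul_cancel₀ _ hk).symm
  have hirr' : Irrational (θ j₀) := by rw [hθdef]; exact hirr
  set M : ℝ := 1 + ∑ j, |θ j| with hM
  have hM1 : 1 ≤ M := le_add_of_nonneg_right (Finset.sum_nonneg fun _ _ => abs_nonneg _)
  have hMθ : ∀ j, |θ j| ≤ M := by
    intro j
    have := Finset.single_le_sum (f := fun j => |θ j|) (fun _ _ => abs_nonneg _)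
      (Finset.mem_univ j)
    simp only [hM]; linarith
  set ω : ℝ := 1/(2*(n+2)) with hω
  have hωpos : 0 < ω := by positivity
  refine ⟨ω, hωpos, ?_⟩
  set S := {q : Fin n → ℤ | ∀ i j : Fin n, i < j →
        |(q i : ℝ) * ξ j - (q j : ℝ) * ξ i| ≤
          ((Finset.univ.sup fun k => (q k).natAbs : ℕ) : ℝ) ^ (-ω)} with hS
  set C : ℝ := 2*M*|ξ k| + 1 with hC
  have hC1 : 1 ≤ C := by
    have := abs_nonneg (ξ k); nlinarith
  have hξkC : |ξ k| ≤ C := by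
    have := abs_nonneg (ξ k); nlinarith
  set N₀ : ℕ := ⌈max (2*M) (C^2)⌉₊ + 2 with hN₀
  have hN₀M : 2*M ≤ (N₀:ℝ) := by
    calc 2*M ≤ max (2*M) (C^2) := le_max_left _ _
    _ ≤ (⌈max (2*M) (C^2)⌉₊ : ℝ) := Nat.le_ceil _
    _ ≤ (N₀:ℝ) := by rw [hN₀]; push_cast; linarith
  have hN₀C : C^2 ≤ (N₀:ℝ) := by
    calc C^2 ≤ max (2*M) (C^2) := le_max_right _ _
    _ ≤ (⌈max (2*M) (C^2)⌉₊ : ℝ) := Nat.le_ceil _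
    _ ≤ (N₀:ℝ) := by rw [hN₀]; push_cast; linarith
  have hN₀2 : 2 ≤ N₀ := by omega
  -- the main production step
  have key : ∀ N : ℕ, N₀ ≤ N → ∃ q ∈ S,
      0 < |(q k : ℝ) * ξ j₀ - (q j₀ : ℝ) * ξ k| ∧
      |(q k : ℝ) * ξ j₀ - (q j₀ : ℝ) * ξ k| ≤ C / N := by
    intro N hN
    have hN2 : 2 ≤ N := le_trans hN₀2 hN
    have hN1 : 1 ≤ N := by omega
    have hNR : (2:ℝ) ≤ N := by exact_mod_cast hN2
    have hNpos : (0:ℝ) < N := by linarith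
    have hNM : 2*M ≤ (N:ℝ) := le_trans hN₀M (by exact_mod_cast hN)
    have hNC : C^2 ≤ (N:ℝ) := le_trans hN₀C (by exact_mod_cast hN)
    obtain ⟨Q, p, hQ1, hQN, herr⟩ := simul_dirichlet n θ N hN1
    have hub : ∀ i, |(p i:ℝ) - (Q:ℝ)*θ i| ≤ 1/N := by
      intro i; rw [abs_sub_comm]; exact (herr i).le
    have hpk : p k = (Q:ℤ) := by
      have h := herr k
      rw [hθk, mul_one] at h
      have h1 : |(Q:ℝ) - (p k:ℝ)| < 1 := lt_of_lt_of_le h (by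
        rw [div_le_one hNpos]; linarith)
      have h2 : |(Q:ℤ) - p k| < 1 := by exact_mod_cast h1
      have := abs_lt.1 h2
      omega
    set Hp : ℕ := Finset.univ.sup fun i => (p i).natAbs with hHp
    have hHpQ : Q ≤ Hp := by
      have hQk : (p k).natAbs = Q := by rw [hpk]; simp
      rw [← hQk]
      exact Finset.le_sup (f := fun i => (p i).natAbs) (Finset.mem_univ k)
    have hHp1 : (1:ℝ) ≤ (Hp:ℝ) := by exact_mod_cast le_trans hQ1 hHpQ
    have hHp0 : (0:ℝ) ≤ (Hp:ℝ) := by linarith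
    have hQle : (Q:ℝ) ≤ (N:ℝ)^n := by exact_mod_cast hQN
    have hNn1 : (1:ℝ) ≤ (N:ℝ)^n := one_le_pow₀ (by linarith)
    -- height upper bound
    have hHple : (Hp:ℝ) ≤ (N:ℝ)^(n+2) := by
      obtain ⟨i₁, _, hi₁⟩ := Finset.exists_mem_eq_sup Finset.univ
        ⟨k, Finset.mem_univ k⟩ (fun i => (p i).natAbs)
      have hcast : (Hp:ℝ) = |(p i₁ : ℝ)| := by
        rw [hHp, hi₁]
        simp [Nat.cast_natAbs]
      rw [hcast]
      have h1 : |(p i₁:ℝ)| ≤ |(p i₁:ℝ) - (Q:ℝ)*θ i₁| + |(Q:ℝ)*θ i₁| := by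
        calc |(p i₁:ℝ)| = |((p i₁:ℝ) - (Q:ℝ)*θ i₁) + (Q:ℝ)*θ i₁| := by ring_nf
        _ ≤ _ := abs_add_le _ _
      have h2 : |(Q:ℝ)*θ i₁| ≤ (N:ℝ)^n * M := by
        rw [abs_mul]
        apply mul_le_mul _ (hMθ i₁) (abs_nonneg _) (by positivity)
        rw [abs_of_nonneg (by positivity)]; exact hQle
      have h3 : (1:ℝ)/N ≤ 1 := by rw [div_le_one hNpos]; linarith
      have hp2 : (N:ℝ)^(n+1) = (N:ℝ)^n * N := pow_succ _ _
      have hp3 : (N:ℝ)^(n+2) = (N:ℝ)^(n+1) * N := pow_succ _ _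
      have hMN : M ≤ (N:ℝ)/2 := by linarith
      have hNn1' : (1:ℝ) ≤ (N:ℝ)^(n+1) := one_le_pow₀ (by linarith)
      have h4 : (N:ℝ)^n * M ≤ (N:ℝ)^(n+1) / 2 := by
        rw [hp2]
        calc (N:ℝ)^n * M ≤ (N:ℝ)^n * ((N:ℝ)/2) :=
          mul_le_mul_of_nonneg_left hMN (by positivity)
        _ = (N:ℝ)^n * N / 2 := by ring
      have h5 : (N:ℝ)^(n+1) ≤ (N:ℝ)^(n+2) := by
        rw [hp3]
        exact le_mul_of_one_le_right (by positivity) (by linarith)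
      have h6 : (2:ℝ) ≤ (N:ℝ)^(n+1) :=
        le_trans hNR (le_self_pow₀ (by linarith) (by omega))
      have hchain := hub i₁
      calc |(p i₁:ℝ)| ≤ |(p i₁:ℝ) - (Q:ℝ)*θ i₁| + |(Q:ℝ)*θ i₁| := h1
      _ ≤ 1/N + (N:ℝ)^n * M := add_le_add hchain h2
      _ ≤ 1 + (N:ℝ)^(n+1)/2 := add_le_add h3 h4
      _ ≤ (N:ℝ)^(n+1)/2 + (N:ℝ)^(n+1)/2 := by linarith
      _ = (N:ℝ)^(n+1) := by ring
      _ ≤ (N:ℝ)^(n+2) := h5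
    -- membership in S
    have hmem : p ∈ S := by
      intro i j hij
      have hcross : |(p i:ℝ) * ξ j - (p j:ℝ) * ξ i| ≤ C / N := by
        have e1 : (p i:ℝ) * ξ j - (p j:ℝ) * ξ i
            = ξ k * (((p i:ℝ) - (Q:ℝ)*θ i)*θ j - ((p j:ℝ) - (Q:ℝ)*θ j)*θ i) := by
          rw [hξ i, hξ j]; ring
        rw [e1, abs_mul]
        have h2 : |((p i:ℝ) - (Q:ℝ)*θ i)*θ j - ((p j:ℝ) - (Q:ℝ)*θ j)*θ i|
            ≤ 1/N * M + 1/N * M := by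
          calc |((p i:ℝ) - (Q:ℝ)*θ i)*θ j - ((p j:ℝ) - (Q:ℝ)*θ j)*θ i|
              ≤ |((p i:ℝ) - (Q:ℝ)*θ i)*θ j| + |((p j:ℝ) - (Q:ℝ)*θ j)*θ i| := abs_sub _ _
          _ ≤ 1/N * M + 1/N * M := by
              rw [abs_mul, abs_mul]
              exact add_le_add
                (mul_le_mul (hub i) (hMθ j) (abs_nonneg _) (by positivity))
                (mul_le_mul (hub j) (hMθ i) (abs_nonneg _) (by positivity))
        calc |ξ k| * |((p i:ℝ) - (Q:ℝ)*θ i)*θ j - ((p j:ℝ) - (Q:ℝ)*θ j)*θ i|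
            ≤ |ξ k| * (1/N * M + 1/N * M) :=
              mul_le_mul_of_nonneg_left h2 (abs_nonneg _)
        _ = (2*M*|ξ k|) / N := by field_simp; ring
        _ ≤ C / N := by gcongr; rw [hC]; linarith
      refine le_trans hcross ?_
      have hpowpos : (0:ℝ) < (Hp:ℝ)^ω := Real.rpow_pos_of_pos (by linarith) ω
      rw [Real.rpow_neg hHp0, inv_eq_one_div, div_le_div_iff₀ hNpos hpowpos]
      have hX : (Hp:ℝ)^ω ≤ (N:ℝ)^(1/2:ℝ) := by
        calc (Hp:ℝ)^ω ≤ ((N:ℝ)^(n+2))^ω := Real.rpow_le_rpow hHp0 hHple hωpos.le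
        _ = (N:ℝ)^(((n+2:ℕ):ℝ)*ω) := by
            rw [← Real.rpow_natCast (N:ℝ) (n+2), ← Real.rpow_mul hNpos.le]
        _ = (N:ℝ)^(1/2:ℝ) := by
            congr 1
            rw [hω]
            have hne : ((n:ℝ)+2) ≠ 0 := by positivity
            push_cast
            field_simp
        _ ≤ (N:ℝ)^(1/2:ℝ) := le_refl _
      have hs : (N:ℝ)^(1/2:ℝ) * (N:ℝ)^(1/2:ℝ) = N := by
        rw [← Real.rpow_add hNpos]
        norm_num
      have hs0 : (0:ℝ) ≤ (N:ℝ)^(1/2:ℝ) := Real.rpow_nonneg hNpos.le _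
      have hCs : C ≤ (N:ℝ)^(1/2:ℝ) := by nlinarith [hs, hNC, hs0, hC1]
      calc C * (Hp:ℝ)^ω ≤ (N:ℝ)^(1/2:ℝ) * (N:ℝ)^(1/2:ℝ) :=
        mul_le_mul hCs hX (Real.rpow_nonneg hHp0 ω) hs0
      _ = 1 * N := by rw [hs, one_mul]
    -- the distinguished cross product
    have epos_eq : (p k:ℝ) * ξ j₀ - (p j₀:ℝ) * ξ k = ξ k * ((Q:ℝ)*θ j₀ - (p j₀:ℝ)) := by
      rw [hpk, hξ j₀]; push_cast; ring
    refine ⟨p, hmem, ?_, ?_⟩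
    · rw [epos_eq, abs_mul]
      apply mul_pos (abs_pos.2 hk)
      rw [abs_pos, sub_ne_zero]
      have hirrQ : Irrational ((Q:ℝ) * θ j₀) := Irrational.natCast_mul hirr' (by omega)
      exact hirrQ.ne_int (p j₀)
    · rw [epos_eq, abs_mul]
      calc |ξ k| * |(Q:ℝ)*θ j₀ - (p j₀:ℝ)| ≤ |ξ k| * (1/N) :=
        mul_le_mul_of_nonneg_left (herr j₀).le (abs_nonneg _)
      _ = |ξ k| / N := by rw [mul_one_div]
      _ ≤ C / N := by gcongr
  -- infinitude
  by_contra hinf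
  rw [Set.not_infinite] at hinf
  set e : (Fin n → ℤ) → ℝ := fun q => |(q k:ℝ) * ξ j₀ - (q j₀:ℝ) * ξ k| with he
  set F := hinf.toFinset.filter (fun q => 0 < e q) with hF
  obtain ⟨q₀, hq₀S, hq₀pos, _⟩ := key N₀ le_rfl
  have hne : F.Nonempty := ⟨q₀, by
    rw [hF, Finset.mem_filter, Set.Finite.mem_toFinset]
    exact ⟨hq₀S, hq₀pos⟩⟩
  set m := F.inf' hne e with hm
  have hmpos : 0 < m := by
    rw [hm, Finset.lt_inf'_iff]
    intro q hq
    exact (Finset.mem_filter.1 hq).2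
  obtain ⟨N, hNN₀, hNm⟩ : ∃ N : ℕ, N₀ ≤ N ∧ C / N < m := by
    refine ⟨max N₀ (⌈C/m⌉₊ + 1), le_max_left _ _, ?_⟩
    have h1 : C/m < (max N₀ (⌈C/m⌉₊ + 1) : ℕ) := by
      calc C/m ≤ (⌈C/m⌉₊ : ℝ) := Nat.le_ceil _
      _ < ((⌈C/m⌉₊ + 1 : ℕ) : ℝ) := by push_cast; linarith
      _ ≤ _ := by exact_mod_cast Nat.le_max_right N₀ (⌈C/m⌉₊ + 1)
    have hNpos : (0:ℝ) < (max N₀ (⌈C/m⌉₊ + 1) : ℕ) := by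
      have : 2 ≤ max N₀ (⌈C/m⌉₊ + 1) := le_trans hN₀2 (le_max_left _ _)
      exact_mod_cast by omega
    rw [div_lt_iff₀ hNpos]
    calc C = (C/m) * m := by field_simp
    _ < ((max N₀ (⌈C/m⌉₊ + 1) : ℕ):ℝ) * m := by
        exact mul_lt_mul_of_pos_right h1 hmpos
    _ = m * _ := mul_comm _ _
  obtain ⟨q, hqS, hqpos, hqle⟩ := key N hNN₀
  have hqF : q ∈ F := by
    rw [hF, Finset.mem_filter, Set.Finite.mem_toFinset]
    exact ⟨hqS, hqpos⟩
  linarith [Finset.inf'_le e hqF, hqle]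


lemma exists_ratio_irrational {n : ℕ} (ξ : Fin n → ℝ)
    (hdim : 2 ≤ Module.finrank ℚ ↥(Submodule.span ℚ (Set.range ξ))) :
    ∃ k j₀, ξ k ≠ 0 ∧ Irrational (ξ j₀ / ξ k) := by
  have hk : ∃ k, ξ k ≠ 0 := by
    by_contra h
    push_neg at h
    have : Set.range ξ ⊆ {0} := by
      rintro x ⟨i, rfl⟩; exact h i
    have hle : Submodule.span ℚ (Set.range ξ) ≤ ⊥ :=
      Submodule.span_le.2 (by rw [Submodule.bot_coe]; exact this)
    rw [le_bot_iff.1 hle] at hdim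
    simp [finrank_bot] at hdim
  obtain ⟨k, hk⟩ := hk
  by_contra h
  push_neg at h
  have hrat : ∀ j, ∃ c : ℚ, ξ j / ξ k = (c:ℝ) := by
    intro j
    have := h k j hk
    rw [Irrational] at this
    push_neg at this
    obtain ⟨c, hc⟩ := this
    exact ⟨c, hc.symm⟩
  have hsub : Set.range ξ ⊆ (Submodule.span ℚ {ξ k} : Submodule ℚ ℝ) := by
    rintro x ⟨j, rfl⟩
    obtain ⟨c, hc⟩ := hrat j
    have : ξ j = c • ξ k := by
      rw [Rat.smul_def]
      rw [div_eq_iff hk] at hc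
      linarith [hc]
    rw [this]
    exact Submodule.smul_mem _ _ (Submodule.mem_span_singleton_self _)
  have hle : Submodule.span ℚ (Set.range ξ) ≤ Submodule.span ℚ {ξ k} :=
    Submodule.span_le.2 hsub
  have hfr : Module.finrank ℚ ↥(Submodule.span ℚ (Set.range ξ)) ≤
      Module.finrank ℚ ↥(Submodule.span ℚ ({ξ k} : Set ℝ)) :=
    Submodule.finrank_mono hle
  rw [finrank_span_singleton hk] at hfr
  omega


lemma heightLF_nonneg {n : ℕ} (L : Fin n → ℤ) : 0 ≤ heightLF L := Nat.cast_nonneg _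

lemma coeff_le_heightLF {n : ℕ} (L : Fin n → ℤ) (i : Fin n) : |(L i : ℝ)| ≤ heightLF L := by
  rw [heightLF]
  have h2 : (((L i).natAbs : ℕ) : ℝ) ≤ ((Finset.univ.sup fun i => (L i).natAbs : ℕ) : ℝ) :=
    Nat.cast_le.2 (Finset.le_sup (f := fun i => (L i).natAbs) (Finset.mem_univ i))
  rw [Nat.cast_natAbs, Int.cast_abs] at h2
  exact h2

lemma one_le_heightLF {n : ℕ} {L : Fin n → ℤ} {ξ : Fin n → ℝ} (h : evalLF L ξ ≠ 0) :
    1 ≤ heightLF L := by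
  have : ∃ i, L i ≠ 0 := by
    by_contra hall
    push_neg at hall
    exact h (by simp [evalLF, hall])
  obtain ⟨i, hi⟩ := this
  have h1 : 1 ≤ (L i).natAbs := by omega
  have := Finset.le_sup (f := fun i => (L i).natAbs) (Finset.mem_univ i)
  rw [heightLF]
  exact_mod_cast le_trans h1 this

lemma finite_bdd_height' (n B : ℕ) :
    {q : Fin n → ℤ | (Finset.univ.sup fun k => (q k).natAbs) ≤ B}.Finite := by
  apply Set.Finite.subset (Set.Finite.pi (fun _ : Fin n => Set.finite_Icc (-(B:ℤ)) B))
  intro q hq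
  simp only [Set.mem_setOf_eq] at hq
  simp only [Set.mem_pi, Set.mem_Icc, Set.mem_univ, forall_true_left]
  intro i
  have : (q i).natAbs ≤ B := le_trans (Finset.le_sup (f := fun k => (q k).natAbs) (Finset.mem_univ i)) hq
  omega

lemma exists_big_height' {n : ℕ} {S : Set (Fin n → ℤ)} (hS : S.Infinite) (B : ℕ) :
    ∃ q ∈ S, B ≤ Finset.univ.sup fun k => (q k).natAbs := by
  by_contra h
  push_neg at h
  exact hS (Set.Finite.subset (finite_bdd_height' n B) (fun q hq => le_of_lt (h q hq)))

lemma key_ineq (r : ℕ) (ξ : Fin (r+1) → ℝ) (i₀ : Fin (r+1)) (hi₀ : ξ i₀ ≠ 0)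
    (τ ω : ℝ) (hτ : τ ∈ TSetR r ξ) (hω : 0 < ω)
    (hinf : {q : Fin (r+1) → ℤ | ∀ i j : Fin (r+1), i < j →
      |(q i : ℝ) * ξ j - (q j : ℝ) * ξ i| ≤
        ((Finset.univ.sup fun k => (q k).natAbs : ℕ) : ℝ) ^ (-ω)}.Infinite) :
    τ * ω ≤ 1 := by
  by_contra hcon
  push_neg at hcon
  obtain ⟨hτpos, L, hL0, hLtend, ⟨δ1, hδ1, hrel⟩, ⟨δ2, hδ2, hbd⟩⟩ := hτ
  have hτω : 1/τ < ω := by rw [div_lt_iff₀ hτpos]; linarith [mul_comm τ ω]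
  -- choose ε
  have hcont : ContinuousAt (fun e : ℝ => (1+e)*(1+e)/(τ - e)) 0 :=
    ContinuousAt.div (by fun_prop) (by fun_prop) (by simpa using hτpos.ne')
  have hf : Tendsto (fun e : ℝ => (1+e)*(1+e)/(τ - e)) (𝓝 0) (𝓝 (1/τ)) := by
    have := hcont.tendsto
    norm_num at this
    convert this using 2
    rw [one_div]
  have hg : Tendsto (fun e : ℝ => (1+e)*(1+e)) (𝓝 0) (𝓝 1) := by
    have : ContinuousAt (fun e : ℝ => (1+e)*(1+e)) 0 := by fun_prop
    have := this.tendsto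
    norm_num at this
    exact this
  have h1 : ∀ᶠ e in 𝓝 (0:ℝ), (1+e)*(1+e)/(τ-e) < ω :=
    hf.eventually_lt_const hτω
  have h2 : ∀ᶠ e in 𝓝 (0:ℝ), (1+e)*(1+e)/(τ-e) + (1+e)*(1+e) < ω + 1 :=
    (hf.add hg).eventually_lt_const (by linarith)
  have h3 : ∀ᶠ e in 𝓝 (0:ℝ), e < min (1/2) (τ/2) :=
    eventually_lt_nhds (by positivity)
  have hall := (((h1.and (h2.and h3)).filter_mono nhdsWithin_le_nhds).and
    (eventually_mem_nhdsWithin (s := Set.Ioi (0:ℝ)))).exists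
  obtain ⟨ε, ⟨hε1, hε2, hε3⟩, hεmem⟩ := hall
  have hεpos : (0:ℝ) < ε := Set.mem_Ioi.1 hεmem
  have hεhalf : ε < 1/2 := lt_of_lt_of_le hε3 (min_le_left _ _)
  have hετ : ε < τ/2 := lt_of_lt_of_le hε3 (min_le_right _ _)
  set ρ2 : ℝ := (1+ε)*(1+ε) with hρ2
  set κ : ℝ := ρ2/(τ-ε) with hκ
  have hκω : κ < ω := hε1
  have hκ1 : κ + ρ2 < ω + 1 := hε2
  have hτε : 0 < τ - ε := by linarith
  have hκpos : 0 < κ := by positivity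
  -- N₁
  have habs : ∀ (δ : ℕ → ℝ), Tendsto δ atTop (𝓝 0) → ∀ᶠ n in atTop, |δ n| < ε := by
    intro δ hδ
    have := hδ.eventually (Metric.ball_mem_nhds (0:ℝ) hεpos)
    simpa [Real.dist_eq] using this
  obtain ⟨N₁, hN₁⟩ := Filter.eventually_atTop.1 ((habs δ1 hδ1).and (habs δ2 hδ2))
  -- minimum of first values
  set c₀ : ℝ := (Finset.range (N₁+1)).inf' ⟨0, by simp⟩ (fun m => |evalLF (L m) ξ|) with hc₀
  have hc₀pos : 0 < c₀ := by
    rw [hc₀]; apply (Finset.lt_inf'_iff _).2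
    intro m _
    exact abs_pos.2 (hL0 m)
  have hc₀le : ∀ m ≤ N₁, c₀ ≤ |evalLF (L m) ξ| := by
    intro m hm
    exact Finset.inf'_le _ (Finset.mem_range.2 (by omega))
  -- thresholds
  have hev1 : ∀ᶠ x : ℝ in atTop, x ^ (-(1+ε)) < c₀ :=
    (tendsto_rpow_neg_atTop (by linarith)).eventually_lt_const hc₀pos
  have hev2 : ∀ᶠ x : ℝ in atTop, x^(-ε) + (r+1)*x^(κ-ω) < |ξ i₀| := by
    have ht : Tendsto (fun x : ℝ => x^(-ε) + (r+1)*x^(κ-ω)) atTop (𝓝 (0 + (r+1)*0)) := by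
      apply Tendsto.add (tendsto_rpow_neg_atTop hεpos)
      apply Tendsto.const_mul
      have : (κ - ω) = -(ω - κ) := by ring
      rw [this]
      exact tendsto_rpow_neg_atTop (by linarith)
    norm_num at ht
    exact ht.eventually_lt_const (abs_pos.2 hi₀)
  have hev3 : ∀ᶠ x : ℝ in atTop, (r+1:ℝ)*x^(κ-ω-1+ρ2) < 1 := by
    have ht : Tendsto (fun x : ℝ => (r+1:ℝ)*x^(κ-ω-1+ρ2)) atTop (𝓝 ((r+1)*0)) := by
      apply Tendsto.const_mul
      have : (κ-ω-1+ρ2) = -((ω+1) - (κ+ρ2)) := by ring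
      rw [this]
      exact tendsto_rpow_neg_atTop (by linarith)
    norm_num at ht
    exact ht.eventually_lt_const one_pos
  obtain ⟨x₀, hx₀⟩ := Filter.eventually_atTop.1 ((hev1.and hev2).and hev3)
  -- pick q of large height
  obtain ⟨q, hqS, hqH⟩ := exists_big_height' hinf (max 2 ⌈x₀⌉₊)
  set Qn : ℕ := Finset.univ.sup fun k => (q k).natAbs with hQn
  set X : ℝ := (Qn : ℝ) with hX
  have hX2 : (2:ℝ) ≤ X := by
    rw [hX]
    exact_mod_cast le_trans (le_max_left _ _) hqH
  have hXx₀ : x₀ ≤ X := by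
    calc x₀ ≤ (⌈x₀⌉₊ : ℝ) := Nat.le_ceil _
    _ ≤ X := by rw [hX]; exact_mod_cast le_trans (le_max_right _ _) hqH
  have hXpos : (0:ℝ) < X := by linarith
  have hX1 : (1:ℝ) ≤ X := by linarith
  obtain ⟨⟨hC1, hC2⟩, hC3⟩ := hx₀ X hXx₀
  -- minimal n
  have hexists : ∃ n, |evalLF (L n) ξ| ≤ X ^ (-(1+ε)) := by
    have hpos : (0:ℝ) < X ^ (-(1+ε)) := Real.rpow_pos_of_pos hXpos _
    have := hLtend.eventually (Metric.ball_mem_nhds (0:ℝ) hpos)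
    obtain ⟨n, hn⟩ := this.exists
    simp only [Metric.mem_ball, Real.dist_eq, sub_zero] at hn
    exact ⟨n, hn.le⟩
  classical
  have hnle0 : |evalLF (L (Nat.find hexists)) ξ| ≤ X ^ (-(1+ε)) := Nat.find_spec hexists
  have hnmin : ∀ k < Nat.find hexists, ¬ |evalLF (L k) ξ| ≤ X ^ (-(1+ε)) :=
    fun k hk => Nat.find_min hexists hk
  have hnN₁ : N₁ < Nat.find hexists := by
    by_contra hle
    push_neg at hle
    have := hc₀le _ hle
    linarith
  obtain ⟨m, hm⟩ : ∃ m, Nat.find hexists = m + 1 := ⟨Nat.find hexists - 1, by omega⟩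
  rw [hm] at hnle0 hnmin hnN₁
  have hnle : |evalLF (L (m+1)) ξ| ≤ X ^ (-(1+ε)) := hnle0
  have hmN₁ : N₁ ≤ m := by omega
  have hm1N₁ : N₁ ≤ m + 1 := by omega
  have hδ1m : |δ1 m| < ε := (hN₁ m hmN₁).1
  have hδ2n : |δ2 (m+1)| < ε := (hN₁ (m+1) hm1N₁).2
  have hlow' : X ^ (-(1+ε)) < |evalLF (L m) ξ| := by
    have := hnmin m (by omega)
    linarith [not_le.1 this]
  -- lower bound for |L n ξ|
  have hlow : X ^ (-ρ2) ≤ |evalLF (L (m+1)) ξ| := by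
    rw [hrel m]
    have hbase : X ^ (-(1+ε)) ≤ |evalLF (L m) ξ| := hlow'.le
    have hexp : (0:ℝ) ≤ 1 + δ1 m := by
      have := abs_lt.1 hδ1m
      linarith
    calc X ^ (-ρ2) ≤ X ^ (-(1+ε)*(1+δ1 m)) := by
          apply Real.rpow_le_rpow_of_exponent_le hX1
          have := abs_lt.1 hδ1m
          nlinarith
    _ = (X ^ (-(1+ε))) ^ (1+δ1 m) := by
          rw [← Real.rpow_mul hXpos.le]
    _ ≤ |evalLF (L m) ξ| ^ (1+δ1 m) :=
          Real.rpow_le_rpow (Real.rpow_nonneg hXpos.le _) hbase hexp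
  -- height bound
  set H : ℝ := heightLF (L (m+1)) with hH
  have hH1 : 1 ≤ H := one_le_heightLF (hL0 (m+1))
  have hHpos : 0 < H := by linarith
  set a : ℝ := τ - δ2 (m+1) with ha
  have hapos : 0 < a := by
    have := abs_lt.1 hδ2n
    rw [ha]; linarith
  have haτε : τ - ε ≤ a := by
    have := abs_lt.1 hδ2n
    rw [ha]; linarith
  have hHa : H ^ a ≤ X ^ ρ2 := by
    have h1 : X ^ (-ρ2) ≤ H ^ (-a) := by
      have := hbd (m+1)
      rw [show -τ + δ2 (m+1) = -a by rw [ha]; ring] at this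
      exact le_trans hlow this
    have hHapos : (0:ℝ) < H ^ a := Real.rpow_pos_of_pos hHpos _
    have h2 : H ^ a * X ^ (-ρ2) ≤ 1 := by
      calc H ^ a * X ^ (-ρ2) ≤ H ^ a * H ^ (-a) :=
        mul_le_mul_of_nonneg_left h1 hHapos.le
      _ = 1 := by rw [← Real.rpow_add hHpos]; norm_num
    have h3 := mul_le_mul_of_nonneg_right h2 (Real.rpow_nonneg hXpos.le ρ2)
    rw [mul_assoc, ← Real.rpow_add hXpos, one_mul] at h3
    norm_num at h3
    exact h3
  have hHκ : H ≤ X ^ κ := by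
    have h4 : H = (H ^ a) ^ a⁻¹ := by
      rw [← Real.rpow_mul hHpos.le, mul_inv_cancel₀ hapos.ne', Real.rpow_one]
    rw [h4]
    calc (H ^ a) ^ a⁻¹ ≤ (X ^ ρ2) ^ a⁻¹ :=
      Real.rpow_le_rpow (Real.rpow_nonneg hHpos.le _) hHa (by positivity)
    _ = X ^ (ρ2 * a⁻¹) := by rw [← Real.rpow_mul hXpos.le]
    _ ≤ X ^ κ := by
        apply Real.rpow_le_rpow_of_exponent_le hX1
        rw [hκ, div_eq_mul_inv]
        apply mul_le_mul_of_nonneg_left _ (by positivity)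
        exact inv_anti₀ hτε haτε
  -- the integer value
  set Sv : ℤ := ∑ i, L (m+1) i * q i with hSv
  have hid : ∀ i, ξ i * (Sv:ℝ) - (q i:ℝ) * evalLF (L (m+1)) ξ
      = ∑ j, (L (m+1) j : ℝ) * ((q j:ℝ) * ξ i - (q i:ℝ) * ξ j) := by
    intro i
    rw [evalLF, hSv]
    push_cast
    rw [Finset.mul_sum, Finset.mul_sum, ← Finset.sum_sub_distrib]
    exact Finset.sum_congr rfl (fun j _ => by ring)
  have hcr : ∀ i j : Fin (r+1), |(q j:ℝ) * ξ i - (q i:ℝ) * ξ j| ≤ X ^ (-ω) := by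
    intro i j
    rcases lt_trichotomy i j with h|h|h
    · rw [abs_sub_comm]; exact hqS i j h
    · subst h; simp; positivity
    · exact hqS j i h
  have hqabs : ∀ i, |(q i : ℝ)| ≤ X := by
    intro i
    have h2 : (((q i).natAbs : ℕ) : ℝ) ≤ ((Qn:ℕ):ℝ) :=
      Nat.cast_le.2 (Finset.le_sup (f := fun k => (q k).natAbs) (Finset.mem_univ i))
    rw [Nat.cast_natAbs, Int.cast_abs] at h2
    exact h2
  have hsum : ∀ i, |∑ j, (L (m+1) j : ℝ) * ((q j:ℝ) * ξ i - (q i:ℝ) * ξ j)|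
      ≤ (r+1) * H * X ^ (-ω) := by
    intro i
    calc |∑ j, (L (m+1) j : ℝ) * ((q j:ℝ) * ξ i - (q i:ℝ) * ξ j)|
        ≤ ∑ j, |(L (m+1) j : ℝ) * ((q j:ℝ) * ξ i - (q i:ℝ) * ξ j)| :=
          Finset.abs_sum_le_sum_abs _ _
    _ ≤ ∑ _j : Fin (r+1), H * X ^ (-ω) := by
        apply Finset.sum_le_sum
        intro j _
        rw [abs_mul]
        exact mul_le_mul (coeff_le_heightLF _ j) (hcr i j) (abs_nonneg _)
          (le_trans zero_le_one hH1)
    _ = (r+1) * H * X ^ (-ω) := by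
        rw [Finset.sum_const, Finset.card_univ, Fintype.card_fin]
        push_cast
        ring
  have hXne : X * X ^ (-(1+ε)) = X ^ (-ε) := by
    rw [show (-ε) = 1 + (-(1+ε)) by ring, Real.rpow_add hXpos, Real.rpow_one]
  have hXκω : X ^ κ * X ^ (-ω) = X ^ (κ-ω) := by
    rw [show κ-ω = κ + (-ω) by ring, Real.rpow_add hXpos]
  by_cases hSv0 : Sv = 0
  · -- degenerate case
    obtain ⟨i₁, _, hi₁⟩ := Finset.exists_mem_eq_sup Finset.univ
      ⟨i₀, Finset.mem_univ i₀⟩ (fun k => (q k).natAbs)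
    have hqi₁ : |(q i₁ : ℝ)| = X := by
      have h2 : ((Qn:ℕ):ℝ) = (((q i₁).natAbs : ℕ):ℝ) := by rw [hQn, hi₁]
      rw [Nat.cast_natAbs, Int.cast_abs] at h2
      exact h2.symm
    have heq := hid i₁
    rw [hSv0] at heq
    push_cast at heq
    rw [mul_zero, zero_sub] at heq
    have habs1 : X * |evalLF (L (m+1)) ξ| ≤ (r+1) * H * X ^ (-ω) := by
      calc X * |evalLF (L (m+1)) ξ| = |(q i₁:ℝ)| * |evalLF (L (m+1)) ξ| := by rw [hqi₁]
      _ = |-( (q i₁:ℝ) * evalLF (L (m+1)) ξ)| := by rw [abs_neg, abs_mul]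
      _ = |∑ j, (L (m+1) j : ℝ) * ((q j:ℝ) * ξ i₁ - (q i₁:ℝ) * ξ j)| := by rw [heq]
      _ ≤ (r+1) * H * X ^ (-ω) := hsum i₁
    have hchain : X * X ^ (-ρ2) ≤ (r+1) * X^κ * X ^ (-ω) := by
      calc X * X ^ (-ρ2) ≤ X * |evalLF (L (m+1)) ξ| :=
        mul_le_mul_of_nonneg_left hlow hXpos.le
      _ ≤ (r+1) * H * X ^ (-ω) := habs1
      _ ≤ (r+1) * X^κ * X ^ (-ω) := by
          apply mul_le_mul_of_nonneg_right _ (Real.rpow_nonneg hXpos.le _)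
          apply mul_le_mul_of_nonneg_left hHκ (by positivity)
    have hL1 : X * X ^ (-ρ2) = X ^ (1-ρ2) := by
      rw [show (1-ρ2) = 1 + (-ρ2) by ring, Real.rpow_add hXpos, Real.rpow_one]
    have hL2 : (r+1:ℝ) * X^κ * X ^ (-ω) = (r+1) * X^(κ-ω) := by
      rw [mul_assoc, hXκω]
    rw [hL1, hL2] at hchain
    have hfin : (r+1:ℝ) * X^(κ-ω) < X ^ (1-ρ2) := by
      have h5 := mul_lt_mul_of_pos_right hC3 (Real.rpow_pos_of_pos hXpos (1-ρ2))
      rw [one_mul, mul_assoc, ← Real.rpow_add hXpos] at h5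
      rw [show κ-ω-1+ρ2 + (1-ρ2) = κ-ω by ring] at h5
      exact h5
    linarith
  · -- nondegenerate case
    have h1le : (1:ℝ) ≤ |(Sv:ℝ)| := by
      rw [← Int.cast_abs]
      exact_mod_cast Int.one_le_abs (by exact_mod_cast hSv0)
    have heq := hid i₀
    have habs2 : |ξ i₀| ≤ X * X ^ (-(1+ε)) + (r+1) * X^κ * X ^ (-ω) := by
      calc |ξ i₀| ≤ |ξ i₀| * |(Sv:ℝ)| := le_mul_of_one_le_right (abs_nonneg _) h1le
      _ = |ξ i₀ * (Sv:ℝ)| := (abs_mul _ _).symm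
      _ = |(q i₀:ℝ) * evalLF (L (m+1)) ξ
            + ∑ j, (L (m+1) j : ℝ) * ((q j:ℝ) * ξ i₀ - (q i₀:ℝ) * ξ j)| := by
          congr 1
          linarith [hid i₀]
      _ ≤ |(q i₀:ℝ) * evalLF (L (m+1)) ξ|
            + |∑ j, (L (m+1) j : ℝ) * ((q j:ℝ) * ξ i₀ - (q i₀:ℝ) * ξ j)| := abs_add_le _ _
      _ ≤ X * X ^ (-(1+ε)) + (r+1) * H * X ^ (-ω) := by
          apply add_le_add _ (hsum i₀)
          rw [abs_mul]
          exact mul_le_mul (hqabs i₀) hnle (abs_nonneg _) hXpos.le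
      _ ≤ X * X ^ (-(1+ε)) + (r+1) * X^κ * X ^ (-ω) := by
          apply add_le_add_right
          apply mul_le_mul_of_nonneg_right _ (Real.rpow_nonneg hXpos.le _)
          apply mul_le_mul_of_nonneg_left hHκ (by positivity)
    rw [hXne, mul_assoc, hXκω] at habs2
    linarith

end Aux

theorem tauR_le_inv_omega0 (r : ℕ) (hr : 1 ≤ r) (ξ : Fin (r + 1) → ℝ)
    (hdim : 2 ≤ Module.finrank ℚ ↥(Submodule.span ℚ (Set.range ξ))) :
    ((tauR r ξ : ℝ) : EReal) ≤ (omega0 ξ)⁻¹ := by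
  obtain ⟨k, j₀, hk, hirr⟩ := exists_ratio_irrational ξ hdim
  obtain ⟨ω₀, hω₀pos, hω₀inf⟩ := exists_good_omega (r+1) ξ k j₀ hk hirr
  have homega_ge : ((ω₀:ℝ) : EReal) ≤ omega0 ξ := le_sSup ⟨ω₀, hω₀pos, rfl, hω₀inf⟩
  have homega_pos : (0:EReal) < omega0 ξ :=
    lt_of_lt_of_le (by exact_mod_cast hω₀pos) homega_ge
  rcases Set.eq_empty_or_nonempty (TSetR r ξ) with hT | ⟨τ₁, hτ₁⟩
  · rw [tauR, hT, Real.sSup_empty]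
    simpa using EReal.inv_nonneg_of_nonneg homega_pos.le
  · have hbdd : BddAbove (TSetR r ξ) := by
      refine ⟨1/ω₀, fun τ hτ => ?_⟩
      have := key_ineq r ξ k hk τ ω₀ hτ hω₀pos hω₀inf
      rw [le_div_iff₀ hω₀pos]
      linarith
    have ht_pos : 0 < tauR r ξ := lt_of_lt_of_le hτ₁.1 (le_csSup hbdd hτ₁)
    have homega_le : omega0 ξ ≤ ((1/(tauR r ξ) : ℝ) : EReal) := by
      apply sSup_le
      rintro x ⟨ω, hωpos, rfl, hωinf⟩
      have hsup_le : tauR r ξ ≤ 1/ω := by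
        apply csSup_le ⟨τ₁, hτ₁⟩
        intro τ hτ
        have := key_ineq r ξ k hk τ ω hτ hωpos hωinf
        rw [le_div_iff₀ hωpos]
        linarith
      have hωt : ω ≤ 1/(tauR r ξ) := by
        rw [le_div_iff₀ ht_pos]
        rw [le_div_iff₀ hωpos] at hsup_le
        linarith [mul_comm ω (tauR r ξ), mul_comm (tauR r ξ) ω]
      exact_mod_cast hωt
    have hne_top : omega0 ξ ≠ ⊤ := by
      intro h
      rw [h] at homega_le
      exact (EReal.coe_lt_top _).not_ge homega_le
    have hne_bot : omega0 ξ ≠ ⊥ := by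
      intro h
      rw [h] at homega_pos
      simp at homega_pos
    have hc : omega0 ξ = (((omega0 ξ).toReal : ℝ) : EReal) :=
      (EReal.coe_toReal hne_top hne_bot).symm
    rw [hc] at homega_pos homega_le ⊢
    rw [← EReal.coe_inv]
    have hcpos : 0 < (omega0 ξ).toReal := by exact_mod_cast homega_pos
    have hcle : (omega0 ξ).toReal ≤ 1/(tauR r ξ) := by exact_mod_cast homega_le
    have hfin : tauR r ξ ≤ ((omega0 ξ).toReal)⁻¹ := by
      rw [le_div_iff₀ ht_pos] at hcle
      rw [← one_div, le_div_iff₀ hcpos]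
      linarith [mul_comm ((omega0 ξ).toReal) (tauR r ξ)]
    exact_mod_cast hfin
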